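/- Let T be a balanced tree with k levels (k ≥ 2) and L its graph Laplacian. If f is a nonzero function on the vertices with Lf = λf and f(root) ≠ 0, then there exists a nonzero stratified function g on the vertices with Lg = λg. -/

import Mathlib

open scoped Classical

/-- Vertices of the balanced tree with `k` levels and branching sequence `c`:
a vertex at level `l` (`0 ≤ l ≤ k-1`) is a function assigning to each `i < l` a
label in `Fin (c i)` (the label of the level-`(i+1)` ancestor among its siblings). -/
abbrev BTVert (k : ℕ) (c : ℕ → ℕ) : Type := Σ l : Fin k, ∀ i : Fin l.val, Fin (c i.val)

/-- `p` is the parent of `v` in the balanced tree. -/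
def IsParentOf {k : ℕ} {c : ℕ → ℕ} (p v : BTVert k c) : Prop :=
  ∃ h : p.1.val + 1 = v.1.val,
    ∀ i : Fin p.1.val, v.2 ⟨i.val, by have := i.isLt; omega⟩ = p.2 i

/-- The balanced tree as a simple graph: each non-root vertex is adjacent to its parent. -/
def btGraph (k : ℕ) (c : ℕ → ℕ) : SimpleGraph (BTVert k c) where
  Adj u v := IsParentOf u v ∨ IsParentOf v u
  symm := ⟨fun u v h => h.symm⟩
  loopless := ⟨fun v h => by
    rcases h with ⟨h, -⟩ | ⟨h, -⟩ <;> omega⟩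

/-- The root (the unique vertex at level 0). -/
def btRoot (k : ℕ) (c : ℕ → ℕ) (hk : 0 < k) : BTVert k c :=
  ⟨⟨0, hk⟩, fun i => i.elim0⟩

/-- `u` belongs to the maximal subtree rooted at `v` (`u` is `v` or a descendant of `v`). -/
def InSubtree {k : ℕ} {c : ℕ → ℕ} (v u : BTVert k c) : Prop :=
  ∃ h : v.1.val ≤ u.1.val,
    ∀ i : Fin v.1.val, u.2 ⟨i.val, by have := i.isLt; omega⟩ = v.2 i

/-- A function on the vertices is stratified if it only depends on the level. -/
def Stratified {k : ℕ} {c : ℕ → ℕ} (f : BTVert k c → ℝ) : Prop :=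
  ∀ u v : BTVert k c, u.1 = v.1 → f u = f v

/-- Number of vertices at level `l`: `n(l) = c(0) ⋯ c(l-1)`. -/
def nlev (c : ℕ → ℕ) (l : ℕ) : ℕ := ∏ i ∈ Finset.range l, c i

/-- The common degree `d(l)` of the vertices at level `l`. -/
def branchDeg (k : ℕ) (c : ℕ → ℕ) (l : ℕ) : ℕ :=
  if l = 0 then c 0 else if l = k - 1 then 1 else c l + 1

/-- The symmetric tridiagonal matrix `T^{(l0)}` with diagonal `d(l0), …, d(k-1)` and
off-diagonal `√c(l0), …, √c(k-2)`. -/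
noncomputable def matT (k : ℕ) (c : ℕ → ℕ) (l0 : ℕ) :
    Matrix (Fin (k - l0)) (Fin (k - l0)) ℝ := fun i j =>
  if i = j then (branchDeg k c (l0 + i.val) : ℝ)
  else if i.val + 1 = j.val then Real.sqrt (c (l0 + i.val))
  else if j.val + 1 = i.val then Real.sqrt (c (l0 + j.val))
  else 0

/-- The tridiagonal matrix `S^{(l0)}` with diagonal `d(l0), …, d(k-1)`, subdiagonal
entries `-1` and superdiagonal entries `-c(l0), …, -c(k-2)`. -/
def matS (k : ℕ) (c : ℕ → ℕ) (l0 : ℕ) :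
    Matrix (Fin (k - l0)) (Fin (k - l0)) ℝ := fun i j =>
  if i = j then (branchDeg k c (l0 + i.val) : ℝ)
  else if i.val + 1 = j.val then -(c (l0 + i.val) : ℝ)
  else if j.val + 1 = i.val then -1
  else 0

/-- `lam` is an eigenvalue of the matrix `A`. -/
def IsEigenvalue {V : Type*} [Fintype V] (A : Matrix V V ℝ) (lam : ℝ) : Prop :=
  ∃ f : V → ℝ, f ≠ 0 ∧ A.mulVec f = lam • f

/-- The (geometric) multiplicity of `lam` as an eigenvalue of `A`. -/
noncomputable def eigMult {V : Type*} [Fintype V] (A : Matrix V V ℝ) (lam : ℝ) : ℕ :=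
  Module.finrank ℝ
    ↥(LinearMap.ker (A.mulVecLin - lam • (LinearMap.id : (V → ℝ) →ₗ[ℝ] (V → ℝ))))

/-- The Dirichlet Laplacian on a subset `Ω` of the vertices of the balanced tree:
the principal submatrix of the Laplacian with rows and columns indexed by `Ω`. -/
noncomputable def dirichletLap (k : ℕ) (c : ℕ → ℕ) (Ω : Set (BTVert k c)) :
    Matrix Ω Ω ℝ := fun u v => (btGraph k c).lapMatrix ℝ u.1 v.1

namespace BTAux
variable {k : ℕ} {c : ℕ → ℕ}

lemma btvert_ext {u v : BTVert k c} (h1 : u.1.val = v.1.val)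
    (h2 : ∀ i : Fin u.1.val, u.2 i = v.2 ⟨i.val, h1 ▸ i.isLt⟩) : u = v := by
  obtain ⟨⟨l1, hl1⟩, f1⟩ := u
  obtain ⟨⟨l2, hl2⟩, f2⟩ := v
  dsimp at h1
  subst h1
  simp only [Sigma.mk.inj_iff, heq_eq_eq]
  refine ⟨trivial, funext fun i => ?_⟩
  simpa using h2 i

/-- total parent function (junk at root) -/
def parentFn (v : BTVert k c) : BTVert k c :=
  ⟨⟨v.1.val - 1, Nat.lt_of_le_of_lt (Nat.sub_le _ _) v.1.isLt⟩,
    fun i => v.2 ⟨i.val, Nat.lt_of_lt_of_le i.isLt (Nat.sub_le _ _)⟩⟩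

lemma parentFn_level (v : BTVert k c) : (parentFn v).1.val = v.1.val - 1 := rfl

lemma isParentOf_parentFn {v : BTVert k c} (h : 0 < v.1.val) :
    IsParentOf (parentFn v) v :=
  ⟨Nat.succ_pred_eq_of_pos h, fun _ => rfl⟩

lemma eq_parentFn {p v : BTVert k c} (h : IsParentOf p v) :
    0 < v.1.val ∧ p = parentFn v := by
  obtain ⟨h1, h2⟩ := h
  have hv : 0 < v.1.val := by omega
  refine ⟨hv, btvert_ext (show p.1.val = v.1.val - 1 by omega) fun i => ?_⟩
  exact (h2 i).symm

def child (p : BTVert k c) (hp : p.1.val + 1 < k) (a : Fin (c p.1.val)) : BTVert k c :=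
  ⟨⟨p.1.val + 1, hp⟩, fun i =>
    if h : i.val < p.1.val then p.2 ⟨i.val, h⟩
    else Fin.cast (congrArg c
      (Nat.le_antisymm (Nat.not_lt.mp h) (Nat.lt_succ_iff.mp i.isLt))) a⟩

lemma child_level (p : BTVert k c) (hp : p.1.val + 1 < k) (a : Fin (c p.1.val)) :
    (child p hp a).1.val = p.1.val + 1 := rfl

lemma isParentOf_child (p : BTVert k c) (hp : p.1.val + 1 < k) (a : Fin (c p.1.val)) :
    IsParentOf p (child p hp a) := by
  refine ⟨rfl, fun i => ?_⟩
  show (if h : i.val < p.1.val then p.2 ⟨i.val, h⟩ else _) = p.2 i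
  rw [dif_pos i.isLt]

lemma child_injective (p : BTVert k c) (hp : p.1.val + 1 < k) :
    Function.Injective (child p hp) := by
  intro a b hab
  have h2 : (child p hp a).2 = (child p hp b).2 :=
    eq_of_heq (Sigma.mk.inj_iff.mp hab).2
  have h3 := congrFun h2 ⟨p.1.val, Nat.lt_succ_self _⟩
  simp only [child] at h3
  rw [dif_neg (lt_irrefl _), dif_neg (lt_irrefl _)] at h3
  exact Fin.ext (by simpa using congrArg Fin.val h3)

lemma eq_child {p w : BTVert k c} (hp : p.1.val + 1 < k) (h : IsParentOf p w) :
    ∃ a : Fin (c p.1.val), w = child p hp a := by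
  obtain ⟨h1, h2⟩ := h
  refine ⟨w.2 ⟨p.1.val, by omega⟩, btvert_ext h1.symm fun i => ?_⟩
  by_cases hi : i.val < p.1.val
  · show w.2 i = (if h : i.val < p.1.val then p.2 ⟨i.val, h⟩ else _)
    rw [dif_pos hi]
    exact h2 ⟨i.val, hi⟩
  · have hiv : i.val = p.1.val := by have := i.isLt; omega
    show w.2 i = (if h : i.val < p.1.val then p.2 ⟨i.val, h⟩ else _)
    rw [dif_neg hi]
    apply Fin.ext
    simp only [Fin.coe_cast]
    exact congrArg (fun j : Fin w.1.val => (w.2 j).val)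
      (Fin.ext hiv : i = ⟨p.1.val, by omega⟩)

end BTAux

namespace BTAux
variable {k : ℕ} {c : ℕ → ℕ}

lemma not_both {u v : BTVert k c} (h1 : IsParentOf u v) (h2 : IsParentOf v u) : False := by
  obtain ⟨h1, -⟩ := h1; obtain ⟨h2, -⟩ := h2; omega

lemma adj_iff {u v : BTVert k c} :
    (btGraph k c).Adj u v ↔ IsParentOf u v ∨ IsParentOf v u := Iff.rfl

lemma no_parent_top {p w : BTVert k c} (hp : ¬ p.1.val + 1 < k) : ¬ IsParentOf p w := by
  rintro ⟨h1, -⟩; have := w.1.isLt; omega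

lemma parentSum (h : BTVert k c → ℝ) (v : BTVert k c) :
    ∑ w : BTVert k c, (if IsParentOf w v then h w else 0)
      = if 0 < v.1.val then h (parentFn v) else 0 := by
  by_cases hv : 0 < v.1.val
  · rw [if_pos hv, Finset.sum_eq_single (parentFn v)]
    · rw [if_pos (isParentOf_parentFn hv)]
    · intro w _ hw
      rw [if_neg (fun hpar => hw (eq_parentFn hpar).2)]
    · intro habs; exact absurd (Finset.mem_univ _) habs
  · rw [if_neg hv]
    exact Finset.sum_eq_zero fun w _ =>
      if_neg (fun hpar => hv (eq_parentFn hpar).1)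

lemma childrenSum (p : BTVert k c) (hp : p.1.val + 1 < k) (h : BTVert k c → ℝ) :
    ∑ w : BTVert k c, (if IsParentOf p w then h w else 0)
      = ∑ a : Fin (c p.1.val), h (child p hp a) := by
  rw [← Finset.sum_filter]
  have himg : Finset.univ.filter (fun w => IsParentOf p w)
      = Finset.univ.image (child p hp) := by
    ext w
    simp only [Finset.mem_filter, Finset.mem_univ, true_and, Finset.mem_image]
    constructor
    · intro hw
      obtain ⟨a, ha⟩ := eq_child hp hw
      exact ⟨a, ha.symm⟩
    · rintro ⟨a, -, rfl⟩
      exact isParentOf_child p hp a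
  rw [himg, Finset.sum_image (fun a _ b _ hab => child_injective p hp hab)]

lemma childrenSum_top (p : BTVert k c) (hp : ¬ p.1.val + 1 < k) (h : BTVert k c → ℝ) :
    ∑ w : BTVert k c, (if IsParentOf p w then h w else 0) = 0 :=
  Finset.sum_eq_zero fun w _ => if_neg (no_parent_top hp)

lemma adjSum (v : BTVert k c) (h : BTVert k c → ℝ) :
    ∑ w : BTVert k c, (if (btGraph k c).Adj v w then h w else 0)
      = (∑ w : BTVert k c, if IsParentOf w v then h w else 0)
        + ∑ w : BTVert k c, (if IsParentOf v w then h w else 0) := by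
  rw [← Finset.sum_add_distrib]
  refine Finset.sum_congr rfl fun w _ => ?_
  rw [adj_iff]
  by_cases h1 : IsParentOf v w
  · rw [if_pos (Or.inl h1), if_pos h1,
      if_neg (fun h2 => not_both h1 h2), zero_add]
  · by_cases h2 : IsParentOf w v
    · rw [if_pos (Or.inr h2), if_pos h2, if_neg h1, add_zero]
    · rw [if_neg (by tauto), if_neg h1, if_neg h2, add_zero]

lemma lap_apply (h : BTVert k c → ℝ) (v : BTVert k c) :
    (((btGraph k c).lapMatrix ℝ).mulVec h) v
      = ((btGraph k c).degree v : ℝ) * h v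
        - ∑ w : BTVert k c, (if (btGraph k c).Adj v w then h w else 0) := by
  rw [SimpleGraph.lapMatrix_mulVec_apply]
  congr 1
  rw [← Finset.sum_filter]
  congr 1
  ext w
  simp [SimpleGraph.mem_neighborFinset]

lemma degree_eq (v : BTVert k c) :
    ((btGraph k c).degree v : ℝ)
      = (if 0 < v.1.val then 1 else 0)
        + (if v.1.val + 1 < k then (c v.1.val : ℝ) else 0) := by
  rw [SimpleGraph.degree_eq_sum_if_adj, adjSum v (fun _ => (1:ℝ)),
    parentSum (fun _ => (1:ℝ)) v]
  by_cases hp : v.1.val + 1 < k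
  · rw [childrenSum v hp (fun _ => (1:ℝ)), if_pos hp]
    simp
  · rw [childrenSum_top v hp (fun _ => (1:ℝ)), if_neg hp]

lemma levelE (l : ℕ) (h : BTVert k c → ℝ) :
    ∑ p ∈ Finset.univ.filter (fun p : BTVert k c => p.1.val = l),
        (∑ w : BTVert k c, if IsParentOf p w then h w else 0)
      = ∑ v ∈ Finset.univ.filter (fun v : BTVert k c => v.1.val = l + 1), h v := by
  have key : ∀ w : BTVert k c,
      (∑ p ∈ Finset.univ.filter (fun p : BTVert k c => p.1.val = l),
          if IsParentOf p w then h w else 0)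
        = if w.1.val = l + 1 then h w else 0 := by
    intro w
    by_cases hw : w.1.val = l + 1
    · rw [if_pos hw, Finset.sum_eq_single (parentFn w)]
      · rw [if_pos (isParentOf_parentFn (show 0 < w.1.val by omega))]
      · intro p _ hne
        exact if_neg (fun hpar => hne (eq_parentFn hpar).2)
      · intro habs
        exact absurd (Finset.mem_filter.mpr
          ⟨Finset.mem_univ _, by rw [parentFn_level]; omega⟩) habs
    · rw [if_neg hw]
      refine Finset.sum_eq_zero fun p hp => ?_
      have hpl : p.1.val = l := (Finset.mem_filter.mp hp).2
      exact if_neg (fun hpar => hw (by obtain ⟨h1, -⟩ := hpar; omega))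
  rw [Finset.sum_comm]
  rw [Finset.sum_congr rfl (fun w _ => key w), ← Finset.sum_filter]

end BTAux

/-- if a Laplacian eigenfunction does not vanish at the root, then the same
eigenvalue admits a nonzero stratified eigenfunction. -/
theorem exists_stratified_eigenfunction (k : ℕ) (hk : 2 ≤ k) (c : ℕ → ℕ)
    (hc : ∀ l, l ≤ k - 2 → 1 ≤ c l) (lam : ℝ) (f : BTVert k c → ℝ) (hf0 : f ≠ 0)
    (hf : ((btGraph k c).lapMatrix ℝ).mulVec f = lam • f)
    (hroot : f (btRoot k c (by omega)) ≠ 0) :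
    ∃ g : BTVert k c → ℝ, g ≠ 0 ∧ Stratified g ∧
      ((btGraph k c).lapMatrix ℝ).mulVec g = lam • g := by
  classical
  set F : ℕ → Finset (BTVert k c) :=
    fun l => Finset.univ.filter (fun u => u.1.val = l) with hF
  set S : ℕ → ℝ := fun l => ∑ u ∈ F l, f u with hS
  set N : ℕ → ℝ := fun l => (nlev c l : ℝ) with hNdef
  have hcpos : ∀ i, i + 1 < k → (c i : ℝ) ≠ 0 := by
    intro i hi
    have := hc i (by omega)
    positivity
  have hN : ∀ l, l < k → N l ≠ 0 := by
    intro l hl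
    show ((nlev c l : ℕ) : ℝ) ≠ 0
    have : nlev c l ≠ 0 := by
      rw [nlev]
      apply Finset.prod_ne_zero_iff.mpr
      intro i hi
      rw [Finset.mem_range] at hi
      have := hc i (by omega)
      omega
    exact_mod_cast this
  have hNs : ∀ l, N (l + 1) = N l * c l := by
    intro l
    show ((nlev c (l+1) : ℕ) : ℝ) = ((nlev c l : ℕ) : ℝ) * c l
    simp only [nlev, Finset.prod_range_succ]
    push_cast
    ring
  set D : ℕ → ℝ :=
    fun l => (if 0 < l then (1:ℝ) else 0) + (if l + 1 < k then (c l : ℝ) else 0)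
      with hD
  set gv : ℕ → ℝ := fun l => S l / N l with hgv
  -- pointwise eigen equation for f
  have hfp : ∀ u : BTVert k c,
      ((btGraph k c).degree u : ℝ) * f u
        - ∑ w : BTVert k c, (if (btGraph k c).Adj u w then f w else 0)
      = lam * f u := by
    intro u
    rw [← BTAux.lap_apply, hf]
    simp
  -- S vanishes above the top level
  have hStop : ∀ l, ¬ l < k → S l = 0 := by
    intro l hl
    rw [hS]
    apply Finset.sum_eq_zero
    intro u hu
    have := (Finset.mem_filter.mp hu).2
    have := u.1.isLt
    omega
  -- level identity
  have hII : ∀ l, l < k →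
      lam * S l = D l * S l
        - (if 0 < l then (c (l - 1) : ℝ) * S (l - 1) else 0) - S (l + 1) := by
    intro l hl
    have e1 : lam * S l = ∑ u ∈ F l, lam * f u := by
      rw [hS, Finset.mul_sum]
    rw [e1]
    have e2 : ∀ u ∈ F l, lam * f u
        = ((btGraph k c).degree u : ℝ) * f u
          - ((∑ w : BTVert k c, if IsParentOf w u then f w else 0)
            + ∑ w : BTVert k c, (if IsParentOf u w then f w else 0)) := by
      intro u _
      rw [← BTAux.adjSum, hfp u]
    rw [Finset.sum_congr rfl e2, Finset.sum_sub_distrib, Finset.sum_add_distrib]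
    -- degree part
    have e3 : ∑ u ∈ F l, ((btGraph k c).degree u : ℝ) * f u = D l * S l := by
      rw [hS, Finset.mul_sum]
      refine Finset.sum_congr rfl fun u hu => ?_
      have hul : u.1.val = l := (Finset.mem_filter.mp hu).2
      rw [BTAux.degree_eq, hul, hD]
    -- children part
    have e4 : ∑ u ∈ F l, (∑ w : BTVert k c, if IsParentOf u w then f w else 0)
        = S (l + 1) := BTAux.levelE l f
    -- parent part
    have e5 : ∑ u ∈ F l, (∑ w : BTVert k c, if IsParentOf w u then f w else 0)
        = if 0 < l then (c (l - 1) : ℝ) * S (l - 1) else 0 := by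
      rcases Nat.eq_zero_or_pos l with h0 | h0
      · subst h0
        rw [if_neg (lt_irrefl 0)]
        apply Finset.sum_eq_zero
        intro u hu
        have hul : u.1.val = 0 := (Finset.mem_filter.mp hu).2
        rw [BTAux.parentSum]
        rw [if_neg (by omega)]
      · obtain ⟨m, rfl⟩ : ∃ m, l = m + 1 := ⟨l - 1, by omega⟩
        rw [if_pos h0]
        have e6 : ∀ u ∈ F (m + 1),
            (∑ w : BTVert k c, if IsParentOf w u then f w else 0)
              = f (BTAux.parentFn u) := by
          intro u hu
          have hul : u.1.val = m + 1 := (Finset.mem_filter.mp hu).2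
          rw [BTAux.parentSum, if_pos (by omega)]
        rw [Finset.sum_congr rfl e6, ← BTAux.levelE m (fun w => f (BTAux.parentFn w))]
        have e7 : ∀ p ∈ F m,
            (∑ w : BTVert k c, if IsParentOf p w then f (BTAux.parentFn w) else 0)
              = (c m : ℝ) * f p := by
          intro p hp
          have hpl : p.1.val = m := (Finset.mem_filter.mp hp).2
          have hplt : p.1.val + 1 < k := by omega
          have e8 : ∀ w : BTVert k c,
              (if IsParentOf p w then f (BTAux.parentFn w) else 0)
                = (if IsParentOf p w then f p else 0) := by
            intro w
            by_cases hw : IsParentOf p w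
            · rw [if_pos hw, if_pos hw, ← (BTAux.eq_parentFn hw).2]
            · rw [if_neg hw, if_neg hw]
          rw [Finset.sum_congr rfl (fun w _ => e8 w), BTAux.childrenSum p hplt,
            Finset.sum_const, Finset.card_univ, Fintype.card_fin, hpl,
            nsmul_eq_mul]
        rw [Finset.sum_congr rfl e7, ← Finset.mul_sum]
        simp only [Nat.add_sub_cancel]
        rfl
    rw [e3, e4, e5]
    ring
  -- stratified eigen equation
  have hgveq : ∀ l, l < k →
      lam * gv l = D l * gv l - (if 0 < l then gv (l - 1) else 0)
        - (if l + 1 < k then (c l : ℝ) * gv (l + 1) else 0) := by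
    intro l hl
    have h2 := hII l hl
    have hNl := hN l hl
    have eB : (if 0 < l then (c (l - 1) : ℝ) * S (l - 1) else 0) / N l
        = if 0 < l then gv (l - 1) else 0 := by
      rcases Nat.eq_zero_or_pos l with h0 | h0
      · subst h0; simp
      · obtain ⟨m, rfl⟩ : ∃ m, l = m + 1 := ⟨l - 1, by omega⟩
        rw [if_pos h0, if_pos h0]
        simp only [Nat.add_sub_cancel]
        have hcm : (c m : ℝ) ≠ 0 := hcpos m hl
        have hNm : N m ≠ 0 := hN m (by omega)
        show (c m : ℝ) * S m / N (m + 1) = S m / N m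
        rw [hNs m, mul_comm ((c m : ℝ)) (S m), mul_div_mul_right _ _ hcm]
    have eC : S (l + 1) / N l
        = if l + 1 < k then (c l : ℝ) * gv (l + 1) else 0 := by
      by_cases hp : l + 1 < k
      · rw [if_pos hp]
        have hcl : (c l : ℝ) ≠ 0 := hcpos l hp
        have hNl' : N l ≠ 0 := hN l (by omega)
        show S (l + 1) / N l = (c l : ℝ) * (S (l + 1) / N (l + 1))
        rw [hNs l]
        field_simp
      · rw [if_neg hp, hStop (l + 1) hp, zero_div]
    have : lam * S l / N l
        = D l * S l / N l
          - (if 0 < l then (c (l - 1) : ℝ) * S (l - 1) else 0) / N l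
          - S (l + 1) / N l := by
      rw [h2]; ring
    rw [eB, eC] at this
    have egv : ∀ m, gv m = S m / N m := fun m => rfl
    calc lam * gv l = lam * S l / N l := by rw [egv]; ring
      _ = _ := by rw [this, egv l]; ring
  refine ⟨fun v => gv v.1.val, ?_, ?_, ?_⟩
  · -- nonzero
    intro h0
    apply hroot
    have h1 := congrFun h0 (btRoot k c (by omega))
    simp only [Pi.zero_apply] at h1
    have hF0 : F 0 = {btRoot k c (by omega)} := by
      ext u
      simp only [hF, Finset.mem_filter, Finset.mem_univ, true_and,
        Finset.mem_singleton]
      constructor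
      · intro hu
        exact BTAux.btvert_ext hu (fun i => absurd i.isLt (by omega))
      · intro hu; rw [hu]; rfl
    have hS0 : S 0 = f (btRoot k c (by omega)) := by
      show ∑ u ∈ F 0, f u = _
      rw [hF0, Finset.sum_singleton]
    have hN0 : N 0 = 1 := by
      show ((nlev c 0 : ℕ) : ℝ) = 1
      simp [nlev]
    have hgv0 : gv 0 = f (btRoot k c (by omega)) := by
      show S 0 / N 0 = _
      rw [hS0, hN0, div_one]
    rw [← hgv0]
    exact h1
  · -- stratified
    intro u v huv
    simp only
    rw [huv]
  · -- eigen equation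
    funext v
    have hl : v.1.val < k := v.1.isLt
    rw [BTAux.lap_apply, BTAux.adjSum, BTAux.parentSum]
    have hpar : (if 0 < v.1.val then gv ((BTAux.parentFn v).1.val) else 0)
        = if 0 < v.1.val then gv (v.1.val - 1) else 0 := by
      rw [BTAux.parentFn_level]
    have hch : (∑ w : BTVert k c,
        if IsParentOf v w then gv w.1.val else 0)
          = if v.1.val + 1 < k then (c v.1.val : ℝ) * gv (v.1.val + 1) else 0 := by
      by_cases hp : v.1.val + 1 < k
      · rw [if_pos hp, BTAux.childrenSum v hp]
        show ∑ _a : Fin (c v.1.val), gv (v.1.val + 1) = _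
        rw [Finset.sum_const, Finset.card_univ, Fintype.card_fin, nsmul_eq_mul]
      · rw [if_neg hp, BTAux.childrenSum_top v hp]
    rw [hpar, hch, BTAux.degree_eq]
    have h9 := hgveq v.1.val hl
    simp only [Pi.smul_apply, smul_eq_mul]
    have hDl : ((if 0 < v.1.val then (1:ℝ) else 0)
        + if v.1.val + 1 < k then (c v.1.val : ℝ) else 0) = D v.1.val := rfl
    rw [hDl]
    linarith [h9]
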